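/- Let T be the tree with k ≥ 2 children at one distinguished vertex per level and one child at all other vertices (so γ(n) = nk−(n−1), K(m,t) = mk−(m−1)). Then the spectral radius of the forward shift S on H^p(T) is 1, i.e. lim_{m→∞} ‖S^m‖^{1/m} = 1, and hence σ(S) = the closed unit disk, even though ‖S‖ = k^{1/p} > 1. -/

import Mathlib

open scoped BigOperators
open Classical

/-- An infinite, locally finite rooted tree, presented combinatorially via a
parent function and a level (distance-to-root) function.  Every level is a
finite nonempty set of vertices. -/
structure HTree where
  V : Type
  root : V
  parent : V → V
  level : V → ℕ
  level_root : level root = 0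
  root_of_level_zero : ∀ v, level v = 0 → v = root
  level_parent : ∀ v, v ≠ root → level (parent v) + 1 = level v
  finite_level : ∀ n : ℕ, {v : V | level v = n}.Finite
  nonempty_level : ∀ n : ℕ, {v : V | level v = n}.Nonempty

namespace HTree

variable (T : HTree)

/-- The finite set of vertices at level `n`. -/
noncomputable def levelFinset (n : ℕ) : Finset T.V := (T.finite_level n).toFinset

/-- `γ(n)`, the number of vertices at level `n`. -/
noncomputable def gamma (n : ℕ) : ℕ := (T.levelFinset n).card

/-- The set of `m`-children of a vertex `v`. -/
noncomputable def nChildrenFinset (m : ℕ) (v : T.V) : Finset T.V :=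
  (T.levelFinset (T.level v + m)).filter (fun w => T.parent^[m] w = v)

/-- `γ(m,v)`, the number of `m`-children of `v`. -/
noncomputable def numNChildren (m : ℕ) (v : T.V) : ℕ := (T.nChildrenFinset m v).card

/-- The set of children of a vertex. -/
noncomputable def childrenFinset (v : T.V) : Finset T.V := T.nChildrenFinset 1 v

/-- `γ(1,v)`, the number of children of `v`. -/
noncomputable def numChildren (v : T.V) : ℕ := T.numNChildren 1 v

/-- `K(m,r)`, the maximal number of `m`-children among vertices at level `r`. -/
noncomputable def K (m r : ℕ) : ℕ := (T.levelFinset r).sup (fun v => T.numNChildren m v)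

/-- `M_p^p(n,f)`, the `p`-th power of the `p`-th mean of `|f|` over level `n`. -/
noncomputable def Mpp (p : ℝ) (f : T.V → ℂ) (n : ℕ) : ℝ :=
  (1 / (T.gamma n : ℝ)) * ∑ v ∈ T.levelFinset n, ‖f v‖ ^ p

/-- `M_p(n,f)`, the `p`-th mean of `|f|` over level `n`. -/
noncomputable def Mp (p : ℝ) (f : T.V → ℂ) (n : ℕ) : ℝ := (T.Mpp p f n) ^ (1 / p)

/-- Membership in the Hardy space `H^p(T)`. -/
def MemHp (p : ℝ) (f : T.V → ℂ) : Prop := ∃ C : ℝ, ∀ n : ℕ, T.Mp p f n ≤ C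

/-- Membership in the little Hardy space `H^p_0(T)`. -/
def MemHp0 (p : ℝ) (f : T.V → ℂ) : Prop :=
  Filter.Tendsto (T.Mp p f) Filter.atTop (nhds 0)

/-- The `H^p` norm, `sup_n M_p(n,f)`. -/
noncomputable def Hnorm (p : ℝ) (f : T.V → ℂ) : ℝ := ⨆ n : ℕ, T.Mp p f n

/-- The forward shift `(Sf)(v) = f(parent v)`, `(Sf)(root) = 0`. -/
noncomputable def S (f : T.V → ℂ) : T.V → ℂ := fun v => if v = T.root then 0 else f (T.parent v)

/-- The backward shift `(Bf)(v) = Σ_{w child of v} f(w)`. -/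
noncomputable def B (f : T.V → ℂ) : T.V → ℂ := fun v => ∑ w ∈ T.childrenFinset v, f w

/-- An operator `A` is bounded on the subspace described by `Mem`, with the
`H^p` norm. -/
def BoundedOn (A : (T.V → ℂ) → (T.V → ℂ)) (Mem : (T.V → ℂ) → Prop) (p : ℝ) : Prop :=
  ∃ C : ℝ, 0 ≤ C ∧ ∀ f, Mem f → Mem (A f) ∧ T.Hnorm p (A f) ≤ C * T.Hnorm p f

/-- The operator norm of `A` on the subspace described by `Mem`. -/
noncomputable def opNorm (A : (T.V → ℂ) → (T.V → ℂ)) (Mem : (T.V → ℂ) → Prop) (p : ℝ) : ℝ :=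
  sInf {C : ℝ | 0 ≤ C ∧ ∀ f, Mem f → Mem (A f) ∧ T.Hnorm p (A f) ≤ C * T.Hnorm p f}

/-- Hypercyclicity of an operator `A` on the subspace described by `Mem`. -/
def Hypercyclic (A : (T.V → ℂ) → (T.V → ℂ)) (Mem : (T.V → ℂ) → Prop) (p : ℝ) : Prop :=
  ∃ f, Mem f ∧ ∀ g, Mem g → ∀ ε : ℝ, 0 < ε →
    ∃ N : ℕ, T.Hnorm p (fun v => A^[N] f v - g v) < ε

end HTree

section Aux

open Filter Real

namespace HTree

variable {T : HTree}

lemma mem_levelFinset' {n : ℕ} {v : T.V} : v ∈ T.levelFinset n ↔ T.level v = n := by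
  simp [HTree.levelFinset, Set.Finite.mem_toFinset]

lemma gamma_pos' (n : ℕ) : 0 < T.gamma n := by
  obtain ⟨v, hv⟩ := T.nonempty_level n
  exact Finset.card_pos.mpr ⟨v, mem_levelFinset'.mpr hv⟩

lemma ne_root_of_level_pos {v : T.V} (h : 0 < T.level v) : v ≠ T.root := by
  intro heq
  rw [heq, T.level_root] at h
  exact lt_irrefl 0 h

lemma level_parent_iterate (m : ℕ) (v : T.V) (h : m ≤ T.level v) :
    T.level (T.parent^[m] v) + m = T.level v := by
  induction m with
  | zero => simp
  | succ n ih =>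
    have hn : n ≤ T.level v := le_trans (Nat.le_succ n) h
    have ihn := ih hn
    have hpos : 0 < T.level (T.parent^[n] v) := by omega
    have hne : T.parent^[n] v ≠ T.root := ne_root_of_level_pos hpos
    have := T.level_parent _ hne
    rw [Function.iterate_succ_apply']
    omega

lemma S_iterate (m : ℕ) (f : T.V → ℂ) (v : T.V) :
    (T.S)^[m] f v = if T.level v < m then 0 else f (T.parent^[m] v) := by
  induction m generalizing f with
  | zero => simp
  | succ n ih =>
    rw [Function.iterate_succ_apply, ih (T.S f)]
    by_cases h1 : T.level v < n
    · rw [if_pos h1, if_pos (by omega)]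
    · rw [if_neg h1]
      by_cases h2 : T.level v = n
      · have hroot : T.parent^[n] v = T.root := by
          apply T.root_of_level_zero
          have := level_parent_iterate n v (le_of_eq h2.symm)
          omega
        rw [if_pos (by omega), HTree.S, hroot, if_pos rfl]
      · have hgt : n < T.level v := by omega
        have hlev := level_parent_iterate n v (le_of_lt hgt)
        have hne : T.parent^[n] v ≠ T.root := ne_root_of_level_pos (by omega)
        rw [if_neg (by omega), HTree.S, if_neg hne, Function.iterate_succ_apply']

lemma sum_level_fiber (g : T.V → ℝ) (t m : ℕ) :
    ∑ v ∈ T.levelFinset (t + m), g (T.parent^[m] v)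
      = ∑ u ∈ T.levelFinset t, (T.numNChildren m u : ℝ) * g u := by
  have hmaps : ∀ v ∈ T.levelFinset (t + m), T.parent^[m] v ∈ T.levelFinset t := by
    intro v hv
    have hlv : T.level v = t + m := mem_levelFinset'.mp hv
    have := level_parent_iterate m v (by omega)
    exact mem_levelFinset'.mpr (by omega)
  rw [← Finset.sum_fiberwise_of_maps_to hmaps (fun v => g (T.parent^[m] v))]
  refine Finset.sum_congr rfl fun u hu => ?_
  have hlu : T.level u = t := mem_levelFinset'.mp hu
  have hfib : (T.levelFinset (t + m)).filter (fun v => T.parent^[m] v = u)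
      = T.nChildrenFinset m u := by
    rw [HTree.nChildrenFinset, hlu]
  rw [hfib]
  have : ∑ v ∈ T.nChildrenFinset m u, g (T.parent^[m] v)
      = ∑ _v ∈ T.nChildrenFinset m u, g u := by
    refine Finset.sum_congr rfl fun v hv => ?_
    have hv2 : v ∈ Finset.filter (fun v => T.parent^[m] v = u) (T.levelFinset (t + m)) := by
      rw [hfib]; exact hv
    have hv3 : T.parent^[m] v = u := (Finset.mem_filter.mp hv2).2
    rw [hv3]
  rw [this, Finset.sum_const, HTree.numNChildren, nsmul_eq_mul]

lemma Mpp_nonneg (p : ℝ) (f : T.V → ℂ) (n : ℕ) : 0 ≤ T.Mpp p f n := by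
  apply mul_nonneg
  · positivity
  · exact Finset.sum_nonneg fun v _ => Real.rpow_nonneg (norm_nonneg _) p

lemma Mp_nonneg (p : ℝ) (f : T.V → ℂ) (n : ℕ) : 0 ≤ T.Mp p f n :=
  Real.rpow_nonneg (Mpp_nonneg p f n) _

lemma bddAbove_Mp {p : ℝ} {f : T.V → ℂ} (hf : T.MemHp p f) :
    BddAbove (Set.range (T.Mp p f)) := by
  obtain ⟨C, hC⟩ := hf
  exact ⟨C, by rintro x ⟨n, rfl⟩; exact hC n⟩

lemma Mp_le_Hnorm {p : ℝ} {f : T.V → ℂ} (hf : T.MemHp p f) (n : ℕ) :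
    T.Mp p f n ≤ T.Hnorm p f :=
  le_ciSup (bddAbove_Mp hf) n

lemma Hnorm_nonneg {p : ℝ} {f : T.V → ℂ} (hf : T.MemHp p f) : 0 ≤ T.Hnorm p f :=
  le_trans (Mp_nonneg p f 0) (Mp_le_Hnorm hf 0)

section MainAux

variable {T : HTree} {p : ℝ} {k : ℕ}

lemma Mpp_S_iterate_le (hp : 1 ≤ p) (hk : 2 ≤ k)
    (hgamma : ∀ n : ℕ, T.gamma n = n * (k - 1) + 1)
    (m : ℕ) (hm : 1 ≤ m) (hK : T.K m = fun _ => m * (k - 1) + 1)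
    (f : T.V → ℂ) (t : ℕ) :
    T.Mpp p ((T.S)^[m] f) (t + m) ≤ ((m * (k - 1) + 1 : ℕ) : ℝ) * T.Mpp p f t := by
  set A : ℝ := ((m * (k - 1) + 1 : ℕ) : ℝ) with hAdef
  have hA0 : 0 ≤ A := Nat.cast_nonneg _
  have h1 : ∑ v ∈ T.levelFinset (t + m), ‖(T.S)^[m] f v‖ ^ p
      = ∑ u ∈ T.levelFinset t, (T.numNChildren m u : ℝ) * ‖f u‖ ^ p := by
    rw [← sum_level_fiber (fun u => ‖f u‖ ^ p) t m]
    refine Finset.sum_congr rfl fun v hv => ?_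
    have hlv : T.level v = t + m := mem_levelFinset'.mp hv
    rw [S_iterate, if_neg (by omega)]
  have h2 : ∑ u ∈ T.levelFinset t, (T.numNChildren m u : ℝ) * ‖f u‖ ^ p
      ≤ A * ∑ u ∈ T.levelFinset t, ‖f u‖ ^ p := by
    rw [Finset.mul_sum]
    refine Finset.sum_le_sum fun u hu => ?_
    refine mul_le_mul_of_nonneg_right ?_ (Real.rpow_nonneg (norm_nonneg _) p)
    have hle : T.numNChildren m u ≤ T.K m t := Finset.le_sup hu
    have h' : T.K m t = m * (k - 1) + 1 := by rw [hK]
    rw [hAdef]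
    exact_mod_cast h' ▸ hle
  have hg1 : (0:ℝ) < (T.gamma t : ℝ) := by exact_mod_cast gamma_pos' t
  have hg2 : (0:ℝ) < (T.gamma (t + m) : ℝ) := by exact_mod_cast gamma_pos' (t + m)
  have hgle : (T.gamma t : ℝ) ≤ (T.gamma (t + m) : ℝ) := by
    have : T.gamma t ≤ T.gamma (t + m) := by
      rw [hgamma, hgamma]
      have : t * (k - 1) ≤ (t + m) * (k - 1) := Nat.mul_le_mul_right _ (by omega)
      omega
    exact_mod_cast this
  have h3 : 1 / (T.gamma (t + m) : ℝ) ≤ 1 / (T.gamma t : ℝ) :=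
    one_div_le_one_div_of_le hg1 hgle
  have hS0 : (0:ℝ) ≤ ∑ u ∈ T.levelFinset t, ‖f u‖ ^ p :=
    Finset.sum_nonneg fun u _ => Real.rpow_nonneg (norm_nonneg _) p
  rw [HTree.Mpp, HTree.Mpp, h1]
  calc 1 / (T.gamma (t + m) : ℝ) * ∑ u ∈ T.levelFinset t, (T.numNChildren m u : ℝ) * ‖f u‖ ^ p
      ≤ 1 / (T.gamma (t + m) : ℝ) * (A * ∑ u ∈ T.levelFinset t, ‖f u‖ ^ p) :=
        mul_le_mul_of_nonneg_left h2 (by positivity)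
    _ ≤ 1 / (T.gamma t : ℝ) * (A * ∑ u ∈ T.levelFinset t, ‖f u‖ ^ p) :=
        mul_le_mul_of_nonneg_right h3 (by positivity)
    _ = A * (1 / (T.gamma t : ℝ) * ∑ u ∈ T.levelFinset t, ‖f u‖ ^ p) := by ring

lemma Mp_S_iterate_zero (hp : 1 ≤ p) (m : ℕ) (f : T.V → ℂ) (n : ℕ) (hn : n < m) :
    T.Mp p ((T.S)^[m] f) n = 0 := by
  have hp0 : p ≠ 0 := by linarith
  have hMpp : T.Mpp p ((T.S)^[m] f) n = 0 := by
    rw [HTree.Mpp]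
    have : ∑ v ∈ T.levelFinset n, ‖(T.S)^[m] f v‖ ^ p = 0 := by
      refine Finset.sum_eq_zero fun v hv => ?_
      have hlv : T.level v = n := mem_levelFinset'.mp hv
      rw [S_iterate, if_pos (by omega), norm_zero, Real.zero_rpow hp0]
    rw [this, mul_zero]
  rw [HTree.Mp, hMpp, Real.zero_rpow (by positivity)]

lemma Mp_S_iterate_bound (hp : 1 ≤ p) (hk : 2 ≤ k)
    (hgamma : ∀ n : ℕ, T.gamma n = n * (k - 1) + 1)
    (m : ℕ) (hm : 1 ≤ m) (hK : T.K m = fun _ => m * (k - 1) + 1)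
    {f : T.V → ℂ} (hf : T.MemHp p f) (n : ℕ) :
    T.Mp p ((T.S)^[m] f) n ≤ ((m * (k - 1) + 1 : ℕ) : ℝ) ^ (1 / p) * T.Hnorm p f := by
  have hp0 : 0 < p := by linarith
  have hA0 : (0:ℝ) ≤ ((m * (k - 1) + 1 : ℕ) : ℝ) := Nat.cast_nonneg _
  by_cases hn : n < m
  · rw [Mp_S_iterate_zero hp m f n hn]
    exact mul_nonneg (Real.rpow_nonneg hA0 _) (Hnorm_nonneg hf)
  · obtain ⟨t, rfl⟩ : ∃ t, n = t + m := ⟨n - m, by omega⟩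
    have h1 : T.Mp p ((T.S)^[m] f) (t + m)
        ≤ (((m * (k - 1) + 1 : ℕ) : ℝ) * T.Mpp p f t) ^ (1 / p) := by
      rw [HTree.Mp]
      exact Real.rpow_le_rpow (Mpp_nonneg p _ _)
        (Mpp_S_iterate_le hp hk hgamma m hm hK f t) (by positivity)
    rw [Real.mul_rpow hA0 (Mpp_nonneg p f t)] at h1
    refine h1.trans ?_
    exact mul_le_mul_of_nonneg_left (Mp_le_Hnorm hf t) (Real.rpow_nonneg hA0 _)

lemma opNorm_S_iterate (hp : 1 ≤ p) (hk : 2 ≤ k)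
    (hgamma : ∀ n : ℕ, T.gamma n = n * (k - 1) + 1)
    (hK : ∀ m t : ℕ, 1 ≤ m → T.K m t = m * (k - 1) + 1)
    (m : ℕ) (hm : 1 ≤ m) :
    T.opNorm ((T.S)^[m]) (T.MemHp p) p = ((m * (k - 1) + 1 : ℕ) : ℝ) ^ (1 / p) := by
  have hp0 : 0 < p := by linarith
  have hKm : T.K m = fun _ => m * (k - 1) + 1 := funext fun t => hK m t hm
  set A : ℝ := ((m * (k - 1) + 1 : ℕ) : ℝ) with hAdef
  have hA0 : (0:ℝ) ≤ A := Nat.cast_nonneg _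
  have hA1 : (1:ℝ) ≤ A := by
    have h' : (1 : ℕ) ≤ m * (k - 1) + 1 := Nat.le_add_left 1 _
    rw [hAdef]
    exact_mod_cast h'
  have hApos : (0:ℝ) < A := lt_of_lt_of_le one_pos hA1
  have hc1 : (1:ℝ) ≤ (k:ℝ) - 1 := by
    have : (2:ℝ) ≤ (k:ℝ) := by exact_mod_cast hk
    linarith
  have hcast : ∀ n : ℕ, ((n * (k - 1) + 1 : ℕ) : ℝ) = (n:ℝ) * ((k:ℝ) - 1) + 1 := by
    intro n
    push_cast [Nat.cast_sub (by omega : 1 ≤ k)]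
    ring
  apply IsLeast.csInf_eq
  constructor
  · refine ⟨Real.rpow_nonneg hA0 _, fun f hf => ?_⟩
    have hb := Mp_S_iterate_bound hp hk hgamma m hm hKm hf
    exact ⟨⟨A ^ (1/p) * T.Hnorm p f, hb⟩, ciSup_le hb⟩
  · rintro C ⟨hC0, hC⟩
    have hseq : ∀ t : ℕ, (A * (T.gamma t : ℝ) / (T.gamma (t + m) : ℝ)) ^ (1/p) ≤ C := by
      intro t
      have hne : (T.levelFinset t).Nonempty := by
        obtain ⟨v, hv⟩ := T.nonempty_level t
        exact ⟨v, mem_levelFinset'.mpr hv⟩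
      obtain ⟨u, hu, husup⟩ := Finset.exists_mem_eq_sup (T.levelFinset t) hne
        (fun v => T.numNChildren m v)
      have hlu : T.level u = t := mem_levelFinset'.mp hu
      set f : T.V → ℂ := fun w => if w = u then (1:ℂ) else 0 with hfdef
      have hg1 : (0:ℝ) < (T.gamma t : ℝ) := by exact_mod_cast gamma_pos' t
      have hg2 : (0:ℝ) < (T.gamma (t + m) : ℝ) := by exact_mod_cast gamma_pos' (t + m)
      have hMpp : ∀ r, T.Mpp p f r = if r = t then 1 / (T.gamma t : ℝ) else 0 := by
        intro r
        rw [HTree.Mpp]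
        by_cases hr : r = t
        · subst hr
          have : ∑ v ∈ T.levelFinset r, ‖f v‖ ^ p = 1 := by
            rw [Finset.sum_eq_single u]
            · simp [hfdef]
            · intro b hb hbne
              simp [hfdef, hbne, Real.zero_rpow (by linarith : p ≠ 0)]
            · intro habs; exact absurd hu habs
          rw [this, mul_one, if_pos rfl]
        · rw [if_neg hr]
          have : ∑ v ∈ T.levelFinset r, ‖f v‖ ^ p = 0 := by
            refine Finset.sum_eq_zero fun v hv => ?_
            have hlv : T.level v = r := mem_levelFinset'.mp hv
            have hvne : v ≠ u := fun h => hr (by rw [← hlv, h, hlu])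
            simp [hfdef, hvne, Real.zero_rpow (by linarith : p ≠ 0)]
          rw [this, mul_zero]
      have hMp : ∀ r, T.Mp p f r = if r = t then (1 / (T.gamma t : ℝ)) ^ (1/p) else 0 := by
        intro r
        rw [HTree.Mp, hMpp r]
        by_cases hr : r = t
        · rw [if_pos hr, if_pos hr]
        · rw [if_neg hr, if_neg hr, Real.zero_rpow (by positivity)]
      have hmemf : T.MemHp p f := by
        refine ⟨1, fun r => ?_⟩
        rw [hMp r]
        by_cases hr : r = t
        · rw [if_pos hr]
          refine Real.rpow_le_one (by positivity) ?_ (by positivity)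
          rw [div_le_one hg1]
          exact_mod_cast gamma_pos' t
        · rw [if_neg hr]; exact zero_le_one
      have hHf : T.Hnorm p f = (1 / (T.gamma t : ℝ)) ^ (1/p) := by
        refine le_antisymm (ciSup_le fun r => ?_) ?_
        · rw [hMp r]
          by_cases hr : r = t
          · rw [if_pos hr]
          · rw [if_neg hr]; positivity
        · have := Mp_le_Hnorm hmemf t
          rwa [hMp t, if_pos rfl] at this
      obtain ⟨hmemS, hnormS⟩ := hC f hmemf
      have hMppS : T.Mpp p ((T.S)^[m] f) (t + m) = A / (T.gamma (t + m) : ℝ) := by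
        rw [HTree.Mpp]
        have h1 : ∑ v ∈ T.levelFinset (t + m), ‖(T.S)^[m] f v‖ ^ p
            = ∑ w ∈ T.levelFinset t, (T.numNChildren m w : ℝ) * ‖f w‖ ^ p := by
          rw [← sum_level_fiber (fun w => ‖f w‖ ^ p) t m]
          refine Finset.sum_congr rfl fun v hv => ?_
          have hlv : T.level v = t + m := mem_levelFinset'.mp hv
          rw [S_iterate, if_neg (by omega)]
        have h2 : ∑ w ∈ T.levelFinset t, (T.numNChildren m w : ℝ) * ‖f w‖ ^ p = A := by
          rw [Finset.sum_eq_single u]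
          · have hnum : T.numNChildren m u = m * (k - 1) + 1 := by
              rw [← husup, ← HTree.K, hK m t hm]
            have hfu : ‖f u‖ ^ p = 1 := by simp [hfdef]
            rw [hnum, hfu, mul_one, hAdef]
          · intro b hb hbne
            simp [hfdef, hbne, Real.zero_rpow (by linarith : p ≠ 0)]
          · intro habs; exact absurd hu habs
        rw [h1, h2]
        ring
      have hMpS : T.Mp p ((T.S)^[m] f) (t + m) = (A / (T.gamma (t + m) : ℝ)) ^ (1/p) := by
        rw [HTree.Mp, hMppS]
      have hchain : (A / (T.gamma (t + m) : ℝ)) ^ (1/p) ≤ C * (1 / (T.gamma t : ℝ)) ^ (1/p) := by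
        rw [← hMpS, ← hHf]
        exact (Mp_le_Hnorm hmemS (t + m)).trans hnormS
      have hsplit : (A * (T.gamma t : ℝ) / (T.gamma (t + m) : ℝ)) ^ (1/p)
          = (A / (T.gamma (t + m) : ℝ)) ^ (1/p) * ((T.gamma t : ℝ)) ^ (1/p) := by
        rw [← Real.mul_rpow (by positivity) (le_of_lt hg1)]
        ring_nf
      rw [hsplit]
      calc (A / (T.gamma (t + m) : ℝ)) ^ (1/p) * ((T.gamma t : ℝ)) ^ (1/p)
          ≤ (C * (1 / (T.gamma t : ℝ)) ^ (1/p)) * ((T.gamma t : ℝ)) ^ (1/p) :=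
            mul_le_mul_of_nonneg_right hchain (Real.rpow_nonneg (le_of_lt hg1) _)
        _ = C * ((1 / (T.gamma t : ℝ)) * (T.gamma t : ℝ)) ^ (1/p) := by
            rw [Real.mul_rpow (by positivity) (le_of_lt hg1)]; ring
        _ = C := by
            rw [one_div, inv_mul_cancel₀ (ne_of_gt hg1), Real.one_rpow, mul_one]
    -- take the limit t → ∞
    set c : ℝ := (k:ℝ) - 1 with hcdef
    have hcpos : (0:ℝ) < c := by linarith
    have hgr : ∀ n : ℕ, (T.gamma n : ℝ) = (n:ℝ) * c + 1 := by
      intro n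
      rw [hgamma n]
      exact hcast n
    have hAc : A = (m:ℝ) * c + 1 := hcast m
    set d : ℝ := (m:ℝ) * c + 1 with hddef
    have hdpos : (0:ℝ) < d := by positivity
    have htendratio : Filter.Tendsto (fun t : ℕ => ((t:ℝ) * c + 1) / ((t:ℝ) * c + d))
        Filter.atTop (nhds 1) := by
      have heq : ∀ t : ℕ, ((t:ℝ) * c + 1) / ((t:ℝ) * c + d)
          = 1 + (1 - d) * ((t:ℝ) * c + d)⁻¹ := by
        intro t
        have hpos : (0:ℝ) < (t:ℝ) * c + d := by positivity
        field_simp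
        ring
      have h2 : Filter.Tendsto (fun t : ℕ => (t:ℝ) * c + d) Filter.atTop Filter.atTop :=
        Filter.tendsto_atTop_add_const_right _ d
          (Filter.Tendsto.atTop_mul_const hcpos tendsto_natCast_atTop_atTop)
      have h3 := h2.inv_tendsto_atTop
      have h4 : Filter.Tendsto (fun t : ℕ => 1 + (1 - d) * ((t:ℝ) * c + d)⁻¹)
          Filter.atTop (nhds 1) := by
        have := (h3.const_mul (1 - d)).const_add 1
        simpa using this
      exact h4.congr fun t => (heq t).symm
    have htend : Filter.Tendsto (fun t : ℕ => A * (T.gamma t : ℝ) / (T.gamma (t + m) : ℝ))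
        Filter.atTop (nhds A) := by
      have heq : ∀ t : ℕ, A * (T.gamma t : ℝ) / (T.gamma (t + m) : ℝ)
          = A * (((t:ℝ) * c + 1) / ((t:ℝ) * c + d)) := by
        intro t
        rw [hgr, hgr, mul_div_assoc]
        congr 2
        push_cast
        ring
      have := htendratio.const_mul A
      rw [mul_one] at this
      exact this.congr fun t => (heq t).symm
    have hseqtend : Filter.Tendsto
        (fun t : ℕ => (A * (T.gamma t : ℝ) / (T.gamma (t + m) : ℝ)) ^ (1/p))
        Filter.atTop (nhds (A ^ (1/p))) :=
      ((Real.continuousAt_rpow_const A (1/p) (Or.inl (ne_of_gt hApos))).tendsto.comp htend)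
    exact le_of_tendsto hseqtend (Filter.Eventually.of_forall hseq)

end MainAux

end HTree

end Aux

/-- on the tree with one distinguished `k`-branching vertex per level
(`γ(n) = nk−(n−1)`, `K(m,t) = mk−(m−1)`), the forward shift has norm `k^{1/p} > 1`
but spectral radius `lim_m ‖S^m‖^{1/m} = 1`. -/
theorem spectral_radius_one_example (T : HTree) (p : ℝ) (hp : 1 ≤ p)
    (k : ℕ) (hk : 2 ≤ k)
    (hgamma : ∀ n : ℕ, T.gamma n = n * (k - 1) + 1)
    (hK : ∀ m t : ℕ, 1 ≤ m → T.K m t = m * (k - 1) + 1) :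
    T.opNorm T.S (T.MemHp p) p = (k : ℝ) ^ (1 / p) ∧
    1 < T.opNorm T.S (T.MemHp p) p ∧
    Filter.Tendsto (fun m : ℕ => (T.opNorm ((T.S)^[m]) (T.MemHp p) p) ^ ((1 : ℝ) / m))
      Filter.atTop (nhds 1) := by
  have hp0 : 0 < p := by linarith
  have hS1 : T.opNorm T.S (T.MemHp p) p = (k : ℝ) ^ (1 / p) := by
    have h := HTree.opNorm_S_iterate hp hk hgamma hK 1 le_rfl
    rw [Function.iterate_one] at h
    have h1k : (1 * (k - 1) + 1 : ℕ) = k := by omega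
    rw [h, h1k]
  refine ⟨hS1, ?_, ?_⟩
  · rw [hS1]
    have hk0 : (0:ℝ) < (k:ℝ) := by exact_mod_cast (by omega : 0 < k)
    have hk1 : (1:ℝ) < (k:ℝ) := by exact_mod_cast (by omega : 1 < k)
    exact (Real.one_lt_rpow_iff_of_pos hk0).mpr (Or.inl ⟨hk1, by positivity⟩)
  · set c : ℝ := (k:ℝ) - 1 with hcdef
    have hc1 : (1:ℝ) ≤ c := by
      have : (2:ℝ) ≤ (k:ℝ) := by exact_mod_cast hk
      rw [hcdef]; linarith
    have hcpos : (0:ℝ) < c := by linarith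
    have hcast : ∀ n : ℕ, ((n * (k - 1) + 1 : ℕ) : ℝ) = (n:ℝ) * c + 1 := by
      intro n
      rw [hcdef]
      push_cast [Nat.cast_sub (by omega : 1 ≤ k)]
      ring
    have hG : Filter.Tendsto
        (fun m : ℕ => Real.exp ((1 / p * Real.log ((m:ℝ) * c + 1)) * ((1:ℝ) / m)))
        Filter.atTop (nhds 1) := by
      have hlog : Filter.Tendsto (fun m : ℕ => Real.log ((m:ℝ) * c + 1) / (m:ℝ))
          Filter.atTop (nhds 0) := by
        have hbase := Real.tendsto_pow_log_div_mul_add_atTop (1/c) (-(1/c)) 1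
          (one_div_ne_zero (ne_of_gt hcpos))
        have hcomp : Filter.Tendsto (fun m : ℕ => (m:ℝ) * c + 1) Filter.atTop Filter.atTop :=
          Filter.tendsto_atTop_add_const_right _ 1
            (Filter.Tendsto.atTop_mul_const hcpos (tendsto_natCast_atTop_atTop (R := ℝ)))
        have hc2 := hbase.comp hcomp
        refine hc2.congr fun m => ?_
        simp only [Function.comp_apply, pow_one]
        congr 1
        field_simp
        ring
      have h0 : Filter.Tendsto
          (fun m : ℕ => (1 / p) * (Real.log ((m:ℝ) * c + 1) / (m:ℝ)))
          Filter.atTop (nhds 0) := by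
        have := hlog.const_mul (1 / p)
        simpa using this
      have hexp := (Real.continuous_exp.tendsto 0).comp h0
      rw [Real.exp_zero] at hexp
      refine hexp.congr fun m => ?_
      simp only [Function.comp_apply]
      congr 1
      rw [mul_one_div, mul_div_assoc]
    refine Filter.Tendsto.congr' ?_ hG
    filter_upwards [Filter.eventually_ge_atTop 1] with m hm
    rw [HTree.opNorm_S_iterate hp hk hgamma hK m hm, hcast m]
    have hb : (0:ℝ) < (m:ℝ) * c + 1 := by positivity
    rw [Real.rpow_def_of_pos (Real.rpow_pos_of_pos hb (1/p)) ((1:ℝ)/m),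
      Real.log_rpow hb]
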